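/- Let ρ, ρ̂ ∈ (0,1), C, Ĉ > 0 and α, β, α̂, β̂ ∈ ℝ. Let U, Û be locally finite Borel measures on [0,∞) and L, L̂ be slowly varying at 0⁺ with U([0,x])/(x^ρ L(x)) → 1 and Û([0,x])/(x^{ρ̂} L̂(x)) → 1 as x → 0⁺. Define Ψ(x) := C ∫_{[0,x]} e^{(α−β)y} U(dy) and Ψ̂(x) := Ĉ ∫_{[0,x]} e^{(α̂−β̂)y} Û(dy), and set Q⁺ := limsup_{x→0⁺} x^{ρ−ρ̂} L(x)/L̂(x) and Q⁻ := liminf_{x→0⁺} x^{ρ−ρ̂} L(x)/L̂(x) (values in [0,∞]). Then, in the extended reals, C·Q⁻ − Ĉ ≤ liminf_{x→0⁺} (Ψ(x) − Ψ̂(x))/(x^{ρ̂} L̂(x)) ≤ limsup_{x→0⁺} (Ψ(x) − Ψ̂(x))/(x^{ρ̂} L̂(x)) ≤ C·Q⁺ − Ĉ. -/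

import Mathlib

open Filter Topology MeasureTheory Set

/-- A function `L : (0,∞) → (0,∞)` is slowly varying at `0⁺` if for every `l > 0`,
`L(l·x)/L(x) → 1` as `x → 0⁺`. -/
def SlowlyVaryingAtZero (L : ℝ → ℝ) : Prop :=
  ∀ l : ℝ, 0 < l → Tendsto (fun x : ℝ => L (l * x) / L x) (𝓝[>] 0) (𝓝 1)


lemma aux_ratio_tendsto (c rho C : ℝ) (hC : 0 < C)
    (U : Measure ℝ) [IsLocallyFiniteMeasure U] (L : ℝ → ℝ)
    (hLpos : ∀ x : ℝ, 0 < x → 0 < L x)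
    (hU : Tendsto (fun x : ℝ => (U (Set.Icc 0 x)).toReal / (x ^ rho * L x)) (𝓝[>] 0) (𝓝 1)) :
    Tendsto (fun x : ℝ => (C * ∫ y in Set.Icc 0 x, Real.exp (c * y) ∂U) / (x ^ rho * L x))
      (𝓝[>] 0) (𝓝 C) := by
  have hexp : ∀ s : ℝ, Tendsto (fun x : ℝ => Real.exp (s * x)) (𝓝[>] 0) (𝓝 1) := by
    intro s
    have hcont : Continuous fun x : ℝ => Real.exp (s * x) := by continuity
    have := (hcont.tendsto 0).mono_left (nhdsWithin_le_nhds (s := Set.Ioi (0:ℝ)))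
    simpa using this
  have hlo : Tendsto (fun x : ℝ => C * Real.exp (-|c| * x) *
      ((U (Set.Icc 0 x)).toReal / (x ^ rho * L x))) (𝓝[>] 0) (𝓝 C) := by
    have := ((tendsto_const_nhds (x := C)).mul (hexp (-|c|))).mul hU
    simpa using this
  have hhi : Tendsto (fun x : ℝ => C * Real.exp (|c| * x) *
      ((U (Set.Icc 0 x)).toReal / (x ^ rho * L x))) (𝓝[>] 0) (𝓝 C) := by
    have := ((tendsto_const_nhds (x := C)).mul (hexp |c|)).mul hU
    simpa using this
  refine tendsto_of_tendsto_of_tendsto_of_le_of_le' hlo hhi ?_ ?_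
  · filter_upwards [self_mem_nhdsWithin] with x hx
    have hx0 : (0:ℝ) < x := hx
    have hD : 0 < x ^ rho * L x := mul_pos (Real.rpow_pos_of_pos hx0 rho) (hLpos x hx0)
    have hint : IntegrableOn (fun y : ℝ => Real.exp (c * y)) (Set.Icc 0 x) U :=
      (Continuous.continuousOn (by continuity)).integrableOn_compact isCompact_Icc
    have hmono : ∫ y in Set.Icc 0 x, Real.exp (-|c| * x) ∂U
        ≤ ∫ y in Set.Icc 0 x, Real.exp (c * y) ∂U := by
      refine setIntegral_mono_on (integrableOn_const isCompact_Icc.measure_lt_top.ne)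
        hint measurableSet_Icc ?_
      intro y hy
      apply Real.exp_le_exp.2
      have h1 : |c * y| ≤ |c| * x := by
        rw [abs_mul]
        exact mul_le_mul_of_nonneg_left (by rw [abs_of_nonneg hy.1]; exact hy.2) (abs_nonneg c)
      have := neg_abs_le (c * y)
      linarith
    have hconst : ∫ y in Set.Icc 0 x, Real.exp (-|c| * x) ∂U
        = (U (Set.Icc 0 x)).toReal * Real.exp (-|c| * x) := by
      rw [setIntegral_const]; simp [smul_eq_mul]; rfl
    calc C * Real.exp (-|c| * x) * ((U (Set.Icc 0 x)).toReal / (x ^ rho * L x))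
        = C * ((U (Set.Icc 0 x)).toReal * Real.exp (-|c| * x)) / (x ^ rho * L x) := by ring
      _ ≤ (C * ∫ y in Set.Icc 0 x, Real.exp (c * y) ∂U) / (x ^ rho * L x) := by
          gcongr
          exact hconst ▸ hmono
  · filter_upwards [self_mem_nhdsWithin] with x hx
    have hx0 : (0:ℝ) < x := hx
    have hD : 0 < x ^ rho * L x := mul_pos (Real.rpow_pos_of_pos hx0 rho) (hLpos x hx0)
    have hint : IntegrableOn (fun y : ℝ => Real.exp (c * y)) (Set.Icc 0 x) U :=
      (Continuous.continuousOn (by continuity)).integrableOn_compact isCompact_Icc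
    have hmono : ∫ y in Set.Icc 0 x, Real.exp (c * y) ∂U
        ≤ ∫ y in Set.Icc 0 x, Real.exp (|c| * x) ∂U := by
      refine setIntegral_mono_on hint
        (integrableOn_const isCompact_Icc.measure_lt_top.ne) measurableSet_Icc ?_
      intro y hy
      apply Real.exp_le_exp.2
      have h1 : |c * y| ≤ |c| * x := by
        rw [abs_mul]
        exact mul_le_mul_of_nonneg_left (by rw [abs_of_nonneg hy.1]; exact hy.2) (abs_nonneg c)
      have := le_abs_self (c * y)
      linarith
    have hconst : ∫ y in Set.Icc 0 x, Real.exp (|c| * x) ∂U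
        = (U (Set.Icc 0 x)).toReal * Real.exp (|c| * x) := by
      rw [setIntegral_const]; simp [smul_eq_mul]; rfl
    calc (C * ∫ y in Set.Icc 0 x, Real.exp (c * y) ∂U) / (x ^ rho * L x)
        ≤ C * ((U (Set.Icc 0 x)).toReal * Real.exp (|c| * x)) / (x ^ rho * L x) := by
          gcongr
          exact hmono.trans_eq hconst
      _ = C * Real.exp (|c| * x) * ((U (Set.Icc 0 x)).toReal / (x ^ rho * L x)) := by ring


lemma ereal_upper_bound (l : Filter ℝ) [l.NeBot] (A B g : ℝ → ℝ) (C Ch : ℝ) (hC : 0 < C)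
    (hA : Tendsto A l (𝓝 C)) (hB : Tendsto B l (𝓝 Ch)) (hg : ∀ᶠ x in l, 0 ≤ g x) :
    limsup (fun x => ((A x * g x - B x : ℝ) : EReal)) l ≤
      (C : EReal) * (limsup (fun x => ((g x : ℝ) : EReal)) l) - (Ch : EReal) := by
  set Qp := limsup (fun x => ((g x : ℝ) : EReal)) l with hQp
  have h0 : (0 : EReal) ≤ Qp := by
    refine le_limsup_of_frequently_le ?_ (by isBoundedDefault)
    exact (hg.mono fun x hx => by exact_mod_cast hx).frequently
  rcases eq_or_ne Qp ⊤ with htop | hne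
  · rw [htop, EReal.coe_mul_top_of_pos hC, EReal.top_sub_coe]; exact le_top
  · have hbot : Qp ≠ ⊥ := fun h => by rw [h] at h0; simp at h0
    set q := Qp.toReal with hqdef
    have hQq : ((q : ℝ) : EReal) = Qp := EReal.coe_toReal hne hbot
    have hq0 : 0 ≤ q := by
      have : ((0:ℝ):EReal) ≤ ((q:ℝ):EReal) := by rw [hQq]; exact_mod_cast h0
      exact_mod_cast this
    rw [← hQq, ← EReal.coe_mul, ← EReal.coe_sub]
    by_contra hcon
    push_neg at hcon
    obtain ⟨r, hr1, hr2⟩ := EReal.lt_iff_exists_real_btwn.mp hcon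
    have hr : C * q - Ch < r := by exact_mod_cast hr1
    have htend : Tendsto (fun ε : ℝ => (C + ε) * (q + ε) - (Ch - ε)) (𝓝[>] 0)
        (𝓝 (C * q - Ch)) := by
      have hcont : Continuous fun ε : ℝ => (C + ε) * (q + ε) - (Ch - ε) := by continuity
      have := (hcont.tendsto 0).mono_left (nhdsWithin_le_nhds (s := Set.Ioi (0:ℝ)))
      simpa using this
    obtain ⟨ε, hεr, hε0⟩ := ((htend.eventually_lt_const hr).and self_mem_nhdsWithin).exists
    have hε0' : (0:ℝ) < ε := hε0
    have e1 : ∀ᶠ x in l, A x < C + ε := hA.eventually_lt_const (by linarith)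
    have e3 : ∀ᶠ x in l, Ch - ε < B x := hB.eventually_const_lt (by linarith)
    have e4 : ∀ᶠ x in l, g x < q + ε := by
      have hlt : Qp < ((q + ε : ℝ) : EReal) := by
        rw [← hQq]; exact_mod_cast (by linarith : q < q + ε)
      exact (eventually_lt_of_limsup_lt hlt).mono fun x hx => by exact_mod_cast hx
    have hev : ∀ᶠ x in l, (fun x => ((A x * g x - B x : ℝ) : EReal)) x ≤ ((r : ℝ) : EReal) := by
      filter_upwards [e1, e3, e4, hg] with x h1 h3 h4 h5
      have hmul : A x * g x ≤ (C + ε) * (q + ε) :=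
        mul_le_mul h1.le h4.le h5 (by linarith)
      have : A x * g x - B x ≤ r := by linarith
      exact_mod_cast this
    exact absurd (limsup_le_of_le (by isBoundedDefault) hev) (not_le.2 hr2)

lemma ereal_lower_bound (l : Filter ℝ) [l.NeBot] (A B g : ℝ → ℝ) (C Ch : ℝ) (hC : 0 < C)
    (hA : Tendsto A l (𝓝 C)) (hB : Tendsto B l (𝓝 Ch)) (hg : ∀ᶠ x in l, 0 ≤ g x) :
    (C : EReal) * (liminf (fun x => ((g x : ℝ) : EReal)) l) - (Ch : EReal) ≤
      liminf (fun x => ((A x * g x - B x : ℝ) : EReal)) l := by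
  set Qm := liminf (fun x => ((g x : ℝ) : EReal)) l with hQm
  have h0 : (0 : EReal) ≤ Qm := by
    refine le_liminf_of_le (by isBoundedDefault) ?_
    exact hg.mono fun x hx => by exact_mod_cast hx
  rcases eq_or_ne Qm ⊤ with htop | hne
  · rw [htop, EReal.coe_mul_top_of_pos hC, EReal.top_sub_coe]
    refine le_of_eq (Tendsto.liminf_eq ?_).symm
    rw [EReal.tendsto_nhds_top_iff_real]
    intro r
    set K := max 0 (r + Ch + 1) * (2 / C) + 1 with hKdef
    have hK0 : 0 ≤ K := by positivity
    have egK : ∀ᶠ x in l, K < g x := by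
      have : ((K : ℝ) : EReal) < Qm := htop ▸ EReal.coe_lt_top K
      exact (eventually_lt_of_lt_liminf this).mono fun x hx => by exact_mod_cast hx
    have e2 : ∀ᶠ x in l, C / 2 < A x := hA.eventually_const_lt (by linarith)
    have e3 : ∀ᶠ x in l, B x < Ch + 1 := hB.eventually_lt_const (by linarith)
    filter_upwards [egK, e2, e3] with x h4 h2 h3
    have hg0 : 0 < g x := lt_of_le_of_lt hK0 h4
    have h5 : C / 2 * g x ≤ A x * g x := mul_le_mul_of_nonneg_right h2.le hg0.le
    have h6 : C / 2 * K < C / 2 * g x := mul_lt_mul_of_pos_left h4 (by linarith)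
    have h7 : C / 2 * K = max 0 (r + Ch + 1) + C / 2 := by
      rw [hKdef]; field_simp
    have h8 : r + Ch + 1 ≤ max 0 (r + Ch + 1) := le_max_right _ _
    have : r < A x * g x - B x := by linarith
    exact_mod_cast this
  · have hbot : Qm ≠ ⊥ := fun h => by rw [h] at h0; simp at h0
    set q := Qm.toReal with hqdef
    have hQq : ((q : ℝ) : EReal) = Qm := EReal.coe_toReal hne hbot
    have hq0 : 0 ≤ q := by
      have : ((0:ℝ):EReal) ≤ ((q:ℝ):EReal) := by rw [hQq]; exact_mod_cast h0
      exact_mod_cast this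
    rw [← hQq, ← EReal.coe_mul, ← EReal.coe_sub]
    by_contra hcon
    push_neg at hcon
    obtain ⟨r, hr1, hr2⟩ := EReal.lt_iff_exists_real_btwn.mp hcon
    have hr : r < C * q - Ch := by exact_mod_cast hr2
    have htend : Tendsto (fun ε : ℝ => (C - ε) * (q - ε) - (Ch + ε)) (𝓝[>] 0)
        (𝓝 (C * q - Ch)) := by
      have hcont : Continuous fun ε : ℝ => (C - ε) * (q - ε) - (Ch + ε) := by continuity
      have := (hcont.tendsto 0).mono_left (nhdsWithin_le_nhds (s := Set.Ioi (0:ℝ)))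
      simpa using this
    obtain ⟨ε, hεr, hε0, hεC⟩ :=
      ((htend.eventually_const_lt hr).and (Ioo_mem_nhdsGT_of_mem ⟨le_refl 0, hC⟩)).exists
    have e1 : ∀ᶠ x in l, C - ε < A x := hA.eventually_const_lt (by linarith)
    have e3 : ∀ᶠ x in l, B x < Ch + ε := hB.eventually_lt_const (by linarith)
    have e4 : ∀ᶠ x in l, q - ε < g x := by
      have hlt : ((q - ε : ℝ) : EReal) < Qm := by
        rw [← hQq]; exact_mod_cast (by linarith : q - ε < q)
      exact (eventually_lt_of_lt_liminf hlt).mono fun x hx => by exact_mod_cast hx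
    have hev : ∀ᶠ x in l, ((r : ℝ) : EReal) ≤ (fun x => ((A x * g x - B x : ℝ) : EReal)) x := by
      filter_upwards [e1, e3, e4, hg] with x h1 h3 h4 h5
      have hmul : (C - ε) * (q - ε) ≤ A x * g x := by
        rcases le_or_gt 0 (q - ε) with hqe | hqe
        · exact mul_le_mul h1.le h4.le hqe (by linarith)
        · have : (C - ε) * (q - ε) < 0 := mul_neg_of_pos_of_neg (by linarith) hqe
          have hAx : 0 ≤ A x * g x := mul_nonneg (by linarith) h5
          linarith
      have : r ≤ A x * g x - B x := by linarith
      exact_mod_cast this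
    exact absurd (le_liminf_of_le (by isBoundedDefault) hev) (not_le.2 hr1)

/-- Lemma 4.1 of the paper. With `Ψ(x) = C ∫_{[0,x]} e^{(α-β)y} U(dy)`,
`Ψ̂(x) = Ĉ ∫_{[0,x]} e^{(α̂-β̂)y} Û(dy)`, and Tauberian hypotheses
`U([0,x]) ∼ x^ρ L(x)`, `Û([0,x]) ∼ x^ρ̂ L̂(x)` at `0⁺`, one has, in the extended reals,
`C·Q⁻ − Ĉ ≤ liminf (Ψ−Ψ̂)/(x^ρ̂ L̂) ≤ limsup (Ψ−Ψ̂)/(x^ρ̂ L̂) ≤ C·Q⁺ − Ĉ`,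
where `Q⁺`, `Q⁻` are the limsup and liminf at `0⁺` of `x^{ρ−ρ̂} L(x)/L̂(x)`. -/
theorem liminf_limsup_Psi_diff_bounds
    (rho rhoh : ℝ) (hrho : rho ∈ Set.Ioo (0:ℝ) 1) (hrhoh : rhoh ∈ Set.Ioo (0:ℝ) 1)
    (C Ch : ℝ) (hC : 0 < C) (hCh : 0 < Ch)
    (alpha beta alphah betah : ℝ)
    (U Uh : Measure ℝ) [IsLocallyFiniteMeasure U] [IsLocallyFiniteMeasure Uh]
    (hU0 : U (Set.Iio 0) = 0) (hUh0 : Uh (Set.Iio 0) = 0)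
    (L Lh : ℝ → ℝ)
    (hLpos : ∀ x : ℝ, 0 < x → 0 < L x) (hLhpos : ∀ x : ℝ, 0 < x → 0 < Lh x)
    (hLsv : SlowlyVaryingAtZero L) (hLhsv : SlowlyVaryingAtZero Lh)
    (hU : Tendsto (fun x : ℝ => (U (Set.Icc 0 x)).toReal / (x ^ rho * L x))
      (𝓝[>] 0) (𝓝 1))
    (hUh : Tendsto (fun x : ℝ => (Uh (Set.Icc 0 x)).toReal / (x ^ rhoh * Lh x))
      (𝓝[>] 0) (𝓝 1))
    (Psi Psih : ℝ → ℝ)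
    (hPsi : ∀ x : ℝ, Psi x = C * ∫ y in Set.Icc 0 x, Real.exp ((alpha - beta) * y) ∂U)
    (hPsih : ∀ x : ℝ,
      Psih x = Ch * ∫ y in Set.Icc 0 x, Real.exp ((alphah - betah) * y) ∂Uh)
    (Qp Qm : EReal)
    (hQp : Qp = Filter.limsup
      (fun x : ℝ => ((x ^ (rho - rhoh) * L x / Lh x : ℝ) : EReal)) (𝓝[>] 0))
    (hQm : Qm = Filter.liminf
      (fun x : ℝ => ((x ^ (rho - rhoh) * L x / Lh x : ℝ) : EReal)) (𝓝[>] 0)) :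
    (C : EReal) * Qm - (Ch : EReal) ≤
        Filter.liminf
          (fun x : ℝ => (((Psi x - Psih x) / (x ^ rhoh * Lh x) : ℝ) : EReal)) (𝓝[>] 0) ∧
      Filter.liminf
          (fun x : ℝ => (((Psi x - Psih x) / (x ^ rhoh * Lh x) : ℝ) : EReal)) (𝓝[>] 0) ≤
        Filter.limsup
          (fun x : ℝ => (((Psi x - Psih x) / (x ^ rhoh * Lh x) : ℝ) : EReal)) (𝓝[>] 0) ∧
      Filter.limsup
          (fun x : ℝ => (((Psi x - Psih x) / (x ^ rhoh * Lh x) : ℝ) : EReal)) (𝓝[>] 0) ≤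
        (C : EReal) * Qp - (Ch : EReal) := by
  set l := 𝓝[>] (0:ℝ) with hl
  set A : ℝ → ℝ := fun x => Psi x / (x ^ rho * L x) with hA
  set B : ℝ → ℝ := fun x => Psih x / (x ^ rhoh * Lh x) with hB
  set g : ℝ → ℝ := fun x => x ^ (rho - rhoh) * L x / Lh x with hg
  have hAt : Tendsto A l (𝓝 C) := by
    have := aux_ratio_tendsto (alpha - beta) rho C hC U L hLpos hU
    simpa only [hA, ← hPsi] using this
  have hBt : Tendsto B l (𝓝 Ch) := by
    have := aux_ratio_tendsto (alphah - betah) rhoh Ch hCh Uh Lh hLhpos hUh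
    simpa only [hB, ← hPsih] using this
  have hgnn : ∀ᶠ x in l, 0 ≤ g x := by
    filter_upwards [self_mem_nhdsWithin] with x hx
    have hx0 : (0:ℝ) < x := hx
    exact div_nonneg (mul_nonneg (Real.rpow_nonneg hx0.le _) (hLpos x hx0).le)
      (hLhpos x hx0).le
  have hFG : ∀ᶠ x in l, (((Psi x - Psih x) / (x ^ rhoh * Lh x) : ℝ) : EReal)
      = ((A x * g x - B x : ℝ) : EReal) := by
    filter_upwards [self_mem_nhdsWithin] with x hx
    have hx0 : (0:ℝ) < x := hx
    have h1 : x ^ rho ≠ 0 := (Real.rpow_pos_of_pos hx0 rho).ne'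
    have h2 : x ^ rhoh ≠ 0 := (Real.rpow_pos_of_pos hx0 rhoh).ne'
    have h3 : L x ≠ 0 := (hLpos x hx0).ne'
    have h4 : Lh x ≠ 0 := (hLhpos x hx0).ne'
    have hxr : x ^ (rho - rhoh) = x ^ rho / x ^ rhoh := Real.rpow_sub hx0 rho rhoh
    congr 1
    simp only [hA, hB, hg, hxr]
    field_simp
  have hls : limsup (fun x : ℝ => (((Psi x - Psih x) / (x ^ rhoh * Lh x) : ℝ) : EReal)) l
      = limsup (fun x => ((A x * g x - B x : ℝ) : EReal)) l := limsup_congr hFG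
  have hli : liminf (fun x : ℝ => (((Psi x - Psih x) / (x ^ rhoh * Lh x) : ℝ) : EReal)) l
      = liminf (fun x => ((A x * g x - B x : ℝ) : EReal)) l := liminf_congr hFG
  refine ⟨?_, liminf_le_limsup, ?_⟩
  · rw [hli, hQm]
    exact ereal_lower_bound l A B g C Ch hC hAt hBt hgnn
  · rw [hls, hQp]
    exact ereal_upper_bound l A B g C Ch hC hAt hBt hgnn
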